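/- Let D be an acyclic directed multigraph orderable under p, and let w be any vertex. Then there exists a subgraph D' ⊆ D that is orderable under p with balance(D',p,w) ≥ balance(D,p,w) + 2·outdeg_D(w) ≥ p(w) + indeg_D(w). Moreover, if outdeg_D(w) > 0, D' can be taken to be a proper subgraph of D. -/

import Mathlib

variable {V : Type*} [DecidableEq V]

/-- Result of a pebbling move `u → v`: remove two pebbles from `u`, add one to `v`. -/
def applyMove (p : V → ℕ) (u v : V) (x : V) : ℕ :=
  (if x = u then p x - 2 else p x) + (if x = v then 1 else 0)

/-- A list of moves is a valid sequence of pebbling moves from `p` in `G`. -/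
def IsValidSeq (G : SimpleGraph V) : (V → ℕ) → List (V × V) → Prop
  | _, [] => True
  | p, m :: rest => G.Adj m.1 m.2 ∧ 2 ≤ p m.1 ∧ IsValidSeq G (applyMove p m.1 m.2) rest

/-- The distribution after executing a sequence of pebbling moves. -/
def applySeq (p : V → ℕ) : List (V × V) → V → ℕ
  | [] => p
  | m :: rest => applySeq (applyMove p m.1 m.2) rest

/-- Indegree of a vertex in a directed multigraph (multiset of directed edges). -/
def indeg (D : Multiset (V × V)) (v : V) : ℕ :=
  Multiset.card (D.filter fun e => e.2 = v)

/-- Outdegree of a vertex in a directed multigraph. -/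
def outdeg (D : Multiset (V × V)) (v : V) : ℕ :=
  Multiset.card (D.filter fun e => e.1 = v)

/-- balance(D,p,v) = p(v) + indeg_D(v) - 2·outdeg_D(v). -/
def balance (D : Multiset (V × V)) (p : V → ℕ) (v : V) : ℤ :=
  (p v : ℤ) + (indeg D v : ℤ) - 2 * (outdeg D v : ℤ)

/-- `D` is orderable under `p`: some ordering of the edge multiset of `D`
is a valid sequence of pebbling moves. -/
def Orderable (G : SimpleGraph V) (D : Multiset (V × V)) (p : V → ℕ) : Prop :=
  ∃ σ : List (V × V), (σ : Multiset (V × V)) = D ∧ IsValidSeq G p σ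

/-- A directed multigraph is acyclic if its edge relation admits no directed cycle. -/
def DAcyclic (D : Multiset (V × V)) : Prop :=
  ∀ v : V, ¬ Relation.TransGen (fun a b => (a, b) ∈ D) v v

/-- The strongly connected component of `a` in the directed multigraph `D`. -/
def SCC (D : Multiset (V × V)) (a : V) : Set V :=
  {b | Relation.ReflTransGen (fun x y => (x, y) ∈ D) a b ∧
       Relation.ReflTransGen (fun x y => (x, y) ∈ D) b a}

/-- Filtering out moves whose source lies in a closed set `R` preserves validity,
when the starting distributions agree outside `R`. -/
lemma isValidSeq_filter (G : SimpleGraph V) (R : V → Prop) [DecidablePred R] :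
    ∀ (σ : List (V × V)) (p p' : V → ℕ), (∀ v, ¬ R v → p v = p' v) →
      (∀ m ∈ σ, R m.1 → R m.2) → IsValidSeq G p σ →
      IsValidSeq G p' (σ.filter (fun m => decide (¬ R m.1))) := by
  intro σ
  induction σ with
  | nil => intro p p' _ _ _; trivial
  | cons m rest ih =>
    intro p p' hpp hcl hval
    obtain ⟨hadj, h2, hrest⟩ := hval
    by_cases hm : R m.1
    · have hfilt : (m :: rest).filter (fun m => decide (¬ R m.1))
        = rest.filter (fun m => decide (¬ R m.1)) := by
        simp [List.filter_cons, hm]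
      rw [hfilt]
      refine ih (applyMove p m.1 m.2) p' ?_ ?_ hrest
      · intro v hv
        have h1 : v ≠ m.1 := fun e => hv (e ▸ hm)
        have h2' : v ≠ m.2 := fun e => hv (e ▸ hcl m List.mem_cons_self hm)
        simp [applyMove, h1, h2', hpp v hv]
      · intro x hx; exact hcl x (List.mem_cons_of_mem _ hx)
    · have hfilt : (m :: rest).filter (fun m => decide (¬ R m.1))
        = m :: rest.filter (fun m => decide (¬ R m.1)) := by
        simp [List.filter_cons, hm]
      rw [hfilt]
      refine ⟨hadj, by rw [← hpp m.1 hm]; exact h2, ?_⟩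
      refine ih (applyMove p m.1 m.2) (applyMove p' m.1 m.2) ?_ ?_ hrest
      · intro v hv
        simp [applyMove, hpp v hv]
      · intro x hx; exact hcl x (List.mem_cons_of_mem _ hx)

/-- For an acyclic orderable `D` and any vertex `w` there is an orderable subgraph `D' ⊆ D`
with `balance(D',p,w) ≥ balance(D,p,w) + 2·outdeg_D(w) ≥ p(w) + indeg_D(w)`; if
`outdeg_D(w) > 0` then `D'` may be taken to be a proper subgraph. -/

theorem large_outdegree_many_pebbles (G : SimpleGraph V) (D : Multiset (V × V)) (p : V → ℕ)
    (hac : DAcyclic D) (h : Orderable G D p) (w : V) :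
    ∃ D' ≤ D, Orderable G D' p ∧
      balance D p w + 2 * (outdeg D w : ℤ) ≤ balance D' p w ∧
      (p w : ℤ) + (indeg D w : ℤ) ≤ balance D p w + 2 * (outdeg D w : ℤ) ∧
      (0 < outdeg D w → D' ≠ D) := by
  classical
  obtain ⟨σ, hσ, hval⟩ := h
  set R : V → Prop := fun v => Relation.ReflTransGen (fun a b => (a, b) ∈ D) w v with hR
  have hRw : R w := Relation.ReflTransGen.refl
  -- the subgraph: drop every edge whose source is reachable from w
  set P : V × V → Prop := fun e => ¬ R e.1 with hP
  refine ⟨D.filter P, Multiset.filter_le _ _, ?_, ?_, ?_, ?_⟩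
  · -- Orderable
    refine ⟨σ.filter (fun m => decide (¬ R m.1)), ?_, ?_⟩
    · rw [← hσ]
      simp [Multiset.filter_coe, hP]
    · refine isValidSeq_filter G R σ p p (fun _ _ => rfl) ?_ hval
      intro m hm hm1
      have hmD : (m.1, m.2) ∈ D := by
        rw [← hσ]; simpa using hm
      exact Relation.ReflTransGen.tail hm1 hmD
  · -- balance inequality
    have hind : indeg (D.filter P) w = indeg D w := by
      unfold indeg
      rw [Multiset.filter_filter]
      apply congrArg
      apply Multiset.filter_congr
      intro e he
      constructor
      · rintro ⟨h1, _⟩; exact h1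
      · intro h1
        refine ⟨h1, fun hre => hac w ?_⟩
        have heD : (e.1, w) ∈ D := by
          have : e = (e.1, e.2) := rfl
          rw [← h1]; simpa using he
        exact Relation.TransGen.tail' hre heD
    have hout : outdeg (D.filter P) w = 0 := by
      unfold outdeg
      rw [Multiset.filter_filter]
      simp only [Multiset.card_eq_zero]
      rw [Multiset.filter_eq_nil]
      rintro e _ ⟨h1, h2⟩
      exact h2 (by rw [h1])
    unfold balance
    rw [hind, hout]
    push_cast
    ring_nf
    linarith
  · unfold balance; linarith
  · -- properness
    intro hpos hEq
    have hout : outdeg (D.filter P) w = 0 := by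
      unfold outdeg
      rw [Multiset.filter_filter]
      simp only [Multiset.card_eq_zero]
      rw [Multiset.filter_eq_nil]
      rintro e _ ⟨h1, h2⟩
      exact h2 (by rw [h1])
    rw [hEq] at hout
    omega
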